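/- Let v : 2^U → ℝ≥0 be a monotone, normalized XOS valuation on a finite set U partitioned into G_1, …, G_k, let each player i have a monotone normalized cost function c_i : 2^{G_i} → ℝ≥0, let c(S) := Σ_i c_i(S ∩ G_i), and let B ≥ 0. For A ⊆ U let LP*(A) be the supremum, over weight functions x : 2^A → ℝ≥0 with Σ_{S⊆A} c(S)x_S ≤ B and Σ_{S⊆A} x_S ≤ 1, of Σ_{S⊆A} v(S)x_S; and let LP*_Bench be the supremum, over pairs (x, V) with x : 2^U → ℝ≥0, Σ_S c(S)x_S ≤ B, Σ_S x_S ≤ 1, and Σ_S v(S ∩ G_i)x_S ≤ V for every i ∈ [k], of Σ_S v(S)x_S − V. Draw ω uniformly from {1,2}^{[k]} and set U_j := ⋃_{i : ω(i)=j} G_i. Then with probability at least 1/4 it holds simultaneously that LP*(U_2) ≥ LP*(U_1) ≥ LP*_Bench/4 ≥ OPT_Bench(v,B,c)/4 and LP*(U_2) ≥ LP*(U)/2. -/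

import Mathlib

open Finset
open scoped Classical

/-- The items owned by the players given label `j` by the labeling `ω`. -/
def sideSet {n k : ℕ} (G : Fin k → Finset (Fin n)) (ω : Fin k → Fin 2) (j : Fin 2) :
    Finset (Fin n) :=
  (Finset.univ.filter fun i => ω i = j).biUnion G

/-- Probability of an event under the uniform distribution on labelings. -/
noncomputable def prOmega (k : ℕ) (P : (Fin k → Fin 2) → Prop) : ℝ :=
  ((Finset.univ.filter P).card : ℝ) / 2 ^ k

/-- `LP*(A)`: the optimal value of the LP-relaxation BFLP(A) of the budget-feasible
procurement problem restricted to `A`. -/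
noncomputable def LPstar {n k : ℕ} (G : Fin k → Finset (Fin n))
    (v : Finset (Fin n) → ℝ) (c : Fin k → Finset (Fin n) → ℝ) (B : ℝ)
    (A : Finset (Fin n)) : ℝ :=
  sSup {t : ℝ | ∃ x : Finset (Fin n) → ℝ, (∀ S, 0 ≤ x S) ∧
    (∑ S ∈ A.powerset, (∑ i, c i (S ∩ G i)) * x S) ≤ B ∧
    (∑ S ∈ A.powerset, x S) ≤ 1 ∧
    t = ∑ S ∈ A.powerset, v S * x S}

/-- `LP*_Bench`: the optimal value of the benchmark LP. -/
noncomputable def LPBench {n k : ℕ} (G : Fin k → Finset (Fin n))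
    (v : Finset (Fin n) → ℝ) (c : Fin k → Finset (Fin n) → ℝ) (B : ℝ) : ℝ :=
  sSup {t : ℝ | ∃ (x : Finset (Fin n) → ℝ) (V : ℝ), (∀ S, 0 ≤ x S) ∧
    (∑ S : Finset (Fin n), (∑ i, c i (S ∩ G i)) * x S) ≤ B ∧
    (∑ S : Finset (Fin n), x S) ≤ 1 ∧
    (∀ i : Fin k, (∑ S : Finset (Fin n), v (S ∩ G i) * x S) ≤ V) ∧
    t = (∑ S : Finset (Fin n), v S * x S) - V}

set_option maxHeartbeats 1000000

section Reflection

variable {k : ℕ} (a : Fin k → ℝ)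

/-- signed value of item `i` under labeling `ω`. -/
def sgn (ω : Fin k → Fin 2) (i : Fin k) : ℝ := if ω i = 0 then a i else - a i

/-- prefix sum of signed values over indices `< m`. -/
def psum (ω : Fin k → Fin 2) (m : ℕ) : ℝ :=
  ∑ i ∈ Finset.univ.filter (fun i : Fin k => (i : ℕ) < m), sgn a ω i

def swapF : Fin 2 → Fin 2 := fun j => if j = 0 then 1 else 0

def flipAft (t : ℕ) (ω : Fin k → Fin 2) : Fin k → Fin 2 :=
  fun i => if (i : ℕ) ≤ t then ω i else swapF (ω i)

lemma swapF_swapF (b : Fin 2) : swapF (swapF b) = b := by fin_cases b <;> rfl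

lemma sgn_flipAft (t : ℕ) (ω : Fin k → Fin 2) (i : Fin k) :
    sgn a (flipAft t ω) i = if (i : ℕ) ≤ t then sgn a ω i else - sgn a ω i := by
  unfold sgn flipAft
  by_cases h : (i : ℕ) ≤ t
  · simp [h]
  · simp only [h, if_false]
    have : ω i = 0 ∨ ω i = 1 := by omega
    rcases this with h1 | h1 <;> simp [h1, swapF]

lemma abs_sgn_le (ω : Fin k → Fin 2) (i : Fin k) (h0 : ∀ i, 0 ≤ a i) :
    |sgn a ω i| ≤ a i := by
  unfold sgn; by_cases h : ω i = 0 <;> simp [h, abs_le, abs_of_nonneg (h0 i)]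

lemma psum_flipAft (t : ℕ) (ω : Fin k → Fin 2) (m : ℕ) (hm : m ≤ t + 1) :
    psum a (flipAft t ω) m = psum a ω m := by
  unfold psum
  refine Finset.sum_congr rfl fun i hi => ?_
  rw [sgn_flipAft]
  have : (i : ℕ) ≤ t := by
    have := (Finset.mem_filter.1 hi).2; omega
  simp [this]

lemma psum_zero (ω : Fin k → Fin 2) : psum a ω 0 = 0 := by
  unfold psum
  apply Finset.sum_eq_zero
  intro i hi; exact absurd (Finset.mem_filter.1 hi).2 (by omega)

lemma psum_top (ω : Fin k → Fin 2) : psum a ω k = ∑ i, sgn a ω i := by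
  unfold psum
  apply Finset.sum_congr _ (fun _ _ => rfl)
  ext i; simp [i.isLt]

lemma psum_succ (ω : Fin k → Fin 2) (m : ℕ) (hm : m < k) :
    psum a ω (m + 1) = psum a ω m + sgn a ω ⟨m, hm⟩ := by
  unfold psum
  have h : Finset.univ.filter (fun i : Fin k => (i : ℕ) < m + 1) =
      insert ⟨m, hm⟩ (Finset.univ.filter (fun i : Fin k => (i : ℕ) < m)) := by
    ext i
    simp only [Finset.mem_insert, Finset.mem_filter, Finset.mem_univ, true_and]
    constructor
    · intro h; by_cases hh : (i : ℕ) = m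
      · left; exact Fin.ext hh
      · right; omega
    · rintro (rfl | h)
      · simp
      · omega
  rw [h, Finset.sum_insert (by simp)]
  ring

lemma D_flipAft (t : ℕ) (ω : Fin k → Fin 2) :
    (∑ i, sgn a (flipAft t ω) i) = 2 * psum a ω (t + 1) - ∑ i, sgn a ω i := by
  have h1 : (∑ i, sgn a (flipAft t ω) i)
      = ∑ i : Fin k, (if (i : ℕ) ≤ t then sgn a ω i else - sgn a ω i) := by
    refine Finset.sum_congr rfl fun i _ => sgn_flipAft a t ω i
  rw [h1, Finset.sum_ite]
  have h2 : (∑ i, sgn a ω i)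
      = ∑ i ∈ Finset.univ.filter (fun i : Fin k => (i : ℕ) ≤ t), sgn a ω i
        + ∑ i ∈ Finset.univ.filter (fun i : Fin k => ¬ (i : ℕ) ≤ t), sgn a ω i := by
    exact (Finset.sum_filter_add_sum_filter_not _ _ _).symm
  have h3 : psum a ω (t+1) = ∑ i ∈ Finset.univ.filter (fun i : Fin k => (i : ℕ) ≤ t), sgn a ω i := by
    unfold psum
    apply Finset.sum_congr _ (fun _ _ => rfl)
    ext i; simp
  rw [Finset.sum_neg_distrib, h3]
  linarith [h2]

lemma flipAft_flipAft (t : ℕ) (ω : Fin k → Fin 2) : flipAft t (flipAft t ω) = ω := by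
  funext i
  unfold flipAft
  by_cases h : (i : ℕ) ≤ t
  · simp [h]
  · simp [h, swapF_swapF]


lemma abs_psum_le (ω : Fin k → Fin 2) (m : ℕ) (h0 : ∀ i, 0 ≤ a i) :
    |psum a ω m| ≤ ∑ i ∈ Finset.univ.filter (fun i : Fin k => (i : ℕ) < m), a i := by
  refine (Finset.abs_sum_le_sum_abs _ _).trans ?_
  exact Finset.sum_le_sum fun i _ => abs_sgn_le a ω i h0

lemma abs_tail_le (ω : Fin k → Fin 2) (m : ℕ) (h0 : ∀ i, 0 ≤ a i) :
    |(∑ i, sgn a ω i) - psum a ω m| ≤ (∑ i, a i) - ∑ i ∈ Finset.univ.filter (fun i : Fin k => (i : ℕ) < m), a i := by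
  have hsplit : (∑ i, sgn a ω i) - psum a ω m
      = ∑ i ∈ Finset.univ.filter (fun i : Fin k => ¬ (i : ℕ) < m), sgn a ω i := by
    unfold psum
    have := Finset.sum_filter_add_sum_filter_not (Finset.univ : Finset (Fin k))
      (fun i : Fin k => (i : ℕ) < m) (sgn a ω)
    linarith
  have hW : (∑ i, a i) - (∑ i ∈ Finset.univ.filter (fun i : Fin k => (i : ℕ) < m), a i)
      = ∑ i ∈ Finset.univ.filter (fun i : Fin k => ¬ (i : ℕ) < m), a i := by
    have := Finset.sum_filter_add_sum_filter_not (Finset.univ : Finset (Fin k))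
      (fun i : Fin k => (i : ℕ) < m) a
    linarith
  rw [hsplit, hW]
  refine (Finset.abs_sum_le_sum_abs _ _).trans ?_
  exact Finset.sum_le_sum fun i _ => abs_sgn_le a ω i h0

/-- The reflection lemma: at least half of the labelings `ω` satisfy
`|D ω| ≤ (W + V)/2`. -/
lemma reflectionHalf (V : ℝ) (h0 : ∀ i, 0 ≤ a i) (hV : ∀ i, a i ≤ V) (hV0 : 0 ≤ V) :
    2 ^ k ≤ 2 * (Finset.univ.filter (fun ω : Fin k → Fin 2 =>
      |∑ i, sgn a ω i| ≤ ((∑ i, a i) + V) / 2)).card := by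
  set W : ℝ := ∑ i, a i with hW
  have hW0 : 0 ≤ W := Finset.sum_nonneg fun i _ => h0 i
  have habsD : ∀ ω : Fin k → Fin 2, |∑ i, sgn a ω i| ≤ W := by
    intro ω
    refine (Finset.abs_sum_le_sum_abs _ _).trans ?_
    exact Finset.sum_le_sum fun i _ => abs_sgn_le a ω i h0
  rcases le_or_gt W V with hWV | hWV
  · -- trivial case: every ω is good
    have : (Finset.univ.filter (fun ω : Fin k → Fin 2 =>
        |∑ i, sgn a ω i| ≤ (W + V) / 2)) = Finset.univ := by
      apply Finset.filter_true_of_mem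
      intro ω _
      linarith [habsD ω]
    rw [this]
    have : (Finset.univ : Finset (Fin k → Fin 2)).card = 2 ^ k := by
      simp [Fintype.card_fun]
    omega
  · -- main case V < W
    set L : ℝ := (W - V) / 2 with hL
    set thr : ℝ := (W + V) / 2 with hthr
    have hL0 : 0 < L := by rw [hL]; linarith
    have hLthr : L ≤ thr := by rw [hL, hthr]; linarith
    have hk0 : 0 < k := by
      by_contra h
      have : k = 0 := by omega
      subst this
      have : W = 0 := by rw [hW]; simp
      linarith
    set good := Finset.univ.filter (fun ω : Fin k → Fin 2 =>
      |∑ i, sgn a ω i| ≤ (W + V) / 2) with hgood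
    set bad := Finset.univ.filter (fun ω : Fin k → Fin 2 =>
      ¬ |∑ i, sgn a ω i| ≤ (W + V) / 2) with hbad
    have hcardsum : good.card + bad.card = 2 ^ k := by
      rw [hgood, hbad]
      rw [Finset.card_filter_add_card_filter_not]
      simp [Fintype.card_fun]
    -- the crossing predicate
    have hPex : ∀ ω ∈ bad, ∃ j, j < k ∧ L < |psum a ω (j + 1)| := by
      intro ω hω
      have hωb : ¬ |∑ i, sgn a ω i| ≤ (W + V) / 2 := (Finset.mem_filter.1 hω).2
      refine ⟨k - 1, by omega, ?_⟩
      have : k - 1 + 1 = k := by omega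
      rw [this, psum_top]
      push_neg at hωb
      calc L ≤ thr := hLthr
        _ < _ := hωb
    -- the reflection map
    classical
    let ρ : (Fin k → Fin 2) → (Fin k → Fin 2) := fun ω =>
      if h : ∃ j, j < k ∧ L < |psum a ω (j + 1)| then flipAft (Nat.find h) ω else ω
    have hρdef : ∀ (ω : Fin k → Fin 2) (h : ∃ j, j < k ∧ L < |psum a ω (j + 1)|),
        ρ ω = flipAft (Nat.find h) ω := fun ω h => dif_pos h
    -- find is stable under ρ
    have hfind_stable : ∀ (ω : Fin k → Fin 2) (h : ∃ j, j < k ∧ L < |psum a ω (j + 1)|),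
        ∃ h' : ∃ j, j < k ∧ L < |psum a (flipAft (Nat.find h) ω) (j + 1)|,
          Nat.find h' = Nat.find h := by
      intro ω h
      obtain ⟨hk1, hcross⟩ := Nat.find_spec h
      have h' : ∃ j, j < k ∧ L < |psum a (flipAft (Nat.find h) ω) (j + 1)| := by
        refine ⟨Nat.find h, hk1, ?_⟩
        rw [psum_flipAft a _ _ _ (le_refl _)]
        exact hcross
      refine ⟨h', ?_⟩
      rw [Nat.find_eq_iff]
      constructor
      · refine ⟨hk1, ?_⟩
        rw [psum_flipAft a _ _ _ (le_refl _)]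
        exact hcross
      · intro j hj
        have hmin := Nat.find_min h hj
        rw [psum_flipAft a _ _ _ (by omega)]
        exact hmin
    have hρρ : ∀ ω : Fin k → Fin 2, (∃ j, j < k ∧ L < |psum a ω (j + 1)|) → ρ (ρ ω) = ω := by
      intro ω h
      obtain ⟨h', hfind⟩ := hfind_stable ω h
      rw [hρdef ω h, hρdef _ h', hfind]
      exact flipAft_flipAft _ ω
    -- ρ maps bad into good
    have hmaps : ∀ ω ∈ bad, ρ ω ∈ good := by
      intro ω hω
      have hP := hPex ω hω
      have hωb : thr < |∑ i, sgn a ω i| := by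
        have := (Finset.mem_filter.1 hω).2
        push_neg at this
        exact this
      obtain ⟨hτk, hτcross⟩ := Nat.find_spec hP
      set τ := Nat.find hP with hτ
      -- |psum τ| ≤ L
      have hprev : |psum a ω τ| ≤ L := by
        rcases Nat.eq_zero_or_pos τ with h0' | h0'
        · rw [h0', psum_zero]
          simp
          linarith
        · obtain ⟨j, hj⟩ : ∃ j, τ = j + 1 := ⟨τ - 1, by omega⟩
          have hmin := Nat.find_min hP (m := j) (by omega)
          push_neg at hmin
          rw [hj]
          exact hmin (by omega)
      -- step bound
      have hstep : |psum a ω (τ + 1)| ≤ L + V := by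
        rw [psum_succ a ω τ hτk]
        calc |psum a ω τ + sgn a ω ⟨τ, hτk⟩| ≤ |psum a ω τ| + |sgn a ω ⟨τ, hτk⟩| := abs_add_le _ _
          _ ≤ L + V := by
              have h1 := abs_sgn_le a ω ⟨τ, hτk⟩ h0
              have h2 := hV ⟨τ, hτk⟩
              linarith
      set u := psum a ω (τ + 1) with hu
      set d := ∑ i, sgn a ω i with hd
      -- |u| ≤ sum of prefix a's, tail bound
      have hpre : |u| ≤ ∑ i ∈ Finset.univ.filter (fun i : Fin k => (i : ℕ) < τ + 1), a i :=
        abs_psum_le a ω (τ + 1) h0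
      have htail : |d - u| ≤ W - ∑ i ∈ Finset.univ.filter (fun i : Fin k => (i : ℕ) < τ + 1), a i :=
        abs_tail_le a ω (τ + 1) h0
      have htail' : |d - u| ≤ W - |u| := by linarith
      have hdW : |d| ≤ W := habsD ω
      have hLV : L + V = thr := by rw [hL, hthr]; ring
      have hLthrW : L + thr = W := by rw [hL, hthr]; ring
      -- the reflected value
      have hDρ : (∑ i, sgn a (ρ ω) i) = 2 * u - d := by
        rw [hρdef ω hP]
        exact D_flipAft a τ ω
      -- main bound: |2u - d| ≤ thr
      have hmain : |2 * u - d| ≤ thr := by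
        rcases abs_cases d with ⟨hd1, _⟩ | ⟨hd1, _⟩
        · -- d ≥ 0, so d > thr
          have hdthr : thr < d := by rwa [hd1] at hωb
          have huL : L < u := by
            by_contra hle
            push_neg at hle
            have : u < - L := by
              rcases abs_cases u with ⟨h1', _⟩ | ⟨h1', _⟩ <;> rcases lt_or_ge u (-L) with h2' | h2'
              · exact h2'
              · exfalso; rw [h1'] at hτcross; linarith
              · exact h2'
              · exfalso; rw [h1'] at hτcross; nlinarith
            have hcontra : W < d - u := by linarith
            have : d - u ≤ |d - u| := le_abs_self _
            have habsu : 0 ≤ |u| := abs_nonneg _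
            linarith
          have huthr : u ≤ thr := by
            have : u ≤ |u| := le_abs_self _
            linarith
          rw [abs_le]
          constructor
          · -- -thr ≤ 2u - d
            have : d ≤ W := by linarith
            have hVthr : V ≤ thr := by rw [hthr]; linarith
            nlinarith
          · linarith
        · -- d < 0 case: d < -thr
          have hdthr : d < - thr := by
            rcases abs_cases d with ⟨h1', _⟩ | ⟨h1', _⟩
            · linarith
            · linarith
          have huL : u < - L := by
            by_contra hle
            push_neg at hle
            have : L < u := by
              rcases abs_cases u with ⟨h1', _⟩ | ⟨h1', _⟩
              · linarith
              · linarith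
            have hcontra : W < u - d := by linarith
            have h2' : u - d ≤ |d - u| := by
              rw [abs_sub_comm]; exact le_abs_self _
            have habsu : 0 ≤ |u| := abs_nonneg _
            linarith
          have huthr : - thr ≤ u := by
            have : - |u| ≤ u := neg_abs_le _
            linarith
          rw [abs_le]
          constructor
          · linarith
          · have : - W ≤ d := by linarith [neg_abs_le d]
            have hVthr : V ≤ thr := by rw [hthr]; linarith
            nlinarith
      rw [hgood, Finset.mem_filter]
      refine ⟨Finset.mem_univ _, ?_⟩
      rw [hDρ]
      exact hmain
    -- injectivity on bad
    have hinj : Set.InjOn ρ bad := by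
      intro ω₁ h₁ ω₂ h₂ heq
      have e₁ := hρρ ω₁ (hPex ω₁ h₁)
      have e₂ := hρρ ω₂ (hPex ω₂ h₂)
      rw [← e₁, ← e₂, heq]
    have hcard : bad.card ≤ good.card :=
      Finset.card_le_card_of_injOn ρ hmaps hinj
    omega

end Reflection

section LP

variable {n k : ℕ} (G : Fin k → Finset (Fin n)) (v : Finset (Fin n) → ℝ)
  (c : Fin k → Finset (Fin n) → ℝ) (B : ℝ)

def LPset (A : Finset (Fin n)) : Set ℝ :=
  {t : ℝ | ∃ x : Finset (Fin n) → ℝ, (∀ S, 0 ≤ x S) ∧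
    (∑ S ∈ A.powerset, (∑ i, c i (S ∩ G i)) * x S) ≤ B ∧
    (∑ S ∈ A.powerset, x S) ≤ 1 ∧
    t = ∑ S ∈ A.powerset, v S * x S}

lemma LPstar_eq (A : Finset (Fin n)) : LPstar G v c B A = sSup (LPset G v c B A) := rfl

lemma lp_zero_mem (hB : 0 ≤ B) (A : Finset (Fin n)) : (0 : ℝ) ∈ LPset G v c B A := by
  refine ⟨fun _ => 0, fun _ => le_refl _, ?_, ?_, ?_⟩ <;> simp [hB]

lemma lp_bdd (hvnn : ∀ S, 0 ≤ v S) (hvmono : ∀ S T : Finset (Fin n), S ⊆ T → v S ≤ v T)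
    (A : Finset (Fin n)) : BddAbove (LPset G v c B A) := by
  refine ⟨v Finset.univ, ?_⟩
  rintro t ⟨x, hx0, _, hmass, rfl⟩
  calc (∑ S ∈ A.powerset, v S * x S) ≤ ∑ S ∈ A.powerset, v Finset.univ * x S := by
        refine Finset.sum_le_sum fun S _ => ?_
        exact mul_le_mul_of_nonneg_right (hvmono S Finset.univ (Finset.subset_univ S)) (hx0 S)
    _ = v Finset.univ * ∑ S ∈ A.powerset, x S := by rw [Finset.mul_sum]
    _ ≤ v Finset.univ := mul_le_of_le_one_right (hvnn _) hmass

lemma lp_nonneg (hB : 0 ≤ B) (hvnn : ∀ S, 0 ≤ v S)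
    (hvmono : ∀ S T : Finset (Fin n), S ⊆ T → v S ≤ v T) (A : Finset (Fin n)) :
    0 ≤ LPstar G v c B A :=
  le_csSup (lp_bdd G v c B hvnn hvmono A) (lp_zero_mem G v c B hB A)

lemma fiber_sum (U : Finset (Fin n)) (f x : Finset (Fin n) → ℝ) :
    (∑ T ∈ U.powerset, f T * (∑ S ∈ Finset.univ.filter (fun S => S ∩ U = T), x S))
      = ∑ S : Finset (Fin n), f (S ∩ U) * x S := by
  rw [← Finset.sum_fiberwise_of_maps_to (g := fun S => S ∩ U) (t := U.powerset)
        (fun S _ => Finset.mem_powerset.2 Finset.inter_subset_right)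
        (fun S => f (S ∩ U) * x S)]
  refine Finset.sum_congr rfl fun T _ => ?_
  rw [Finset.mul_sum]
  refine Finset.sum_congr rfl fun S hS => ?_
  rw [(Finset.mem_filter.1 hS).2]

lemma restrict_le
    (hcnn : ∀ i (S : Finset (Fin n)), S ⊆ G i → 0 ≤ c i S)
    (hc0 : ∀ i, c i ∅ = 0)
    (hvnn : ∀ S, 0 ≤ v S) (hvmono : ∀ S T : Finset (Fin n), S ⊆ T → v S ≤ v T)
    (U : Finset (Fin n)) (hsplit : ∀ i, G i ⊆ U ∨ G i ∩ U = ∅)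
    (x : Finset (Fin n) → ℝ) (hx0 : ∀ S, 0 ≤ x S)
    (hcost : (∑ S : Finset (Fin n), (∑ i, c i (S ∩ G i)) * x S) ≤ B)
    (hmass : (∑ S : Finset (Fin n), x S) ≤ 1) :
    (∑ S : Finset (Fin n), v (S ∩ U) * x S) ≤ LPstar G v c B U := by
  apply le_csSup (lp_bdd G v c B hvnn hvmono U)
  refine ⟨fun T => ∑ S ∈ Finset.univ.filter (fun S => S ∩ U = T), x S,
    fun T => Finset.sum_nonneg fun S _ => hx0 S, ?_, ?_, (fiber_sum U v x).symm⟩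
  · rw [fiber_sum U (fun T => ∑ i, c i (T ∩ G i)) x]
    refine le_trans (Finset.sum_le_sum fun S _ => ?_) hcost
    refine mul_le_mul_of_nonneg_right (Finset.sum_le_sum fun i _ => ?_) (hx0 S)
    rcases hsplit i with h | h
    · have : S ∩ U ∩ G i = S ∩ G i := by
        rw [Finset.inter_assoc, Finset.inter_eq_right.2 h]
      rw [this]
    · have : S ∩ U ∩ G i = ∅ := by
        apply Finset.eq_empty_of_forall_notMem
        intro e he
        have h1 := Finset.mem_inter.1 he
        have h2 := Finset.mem_inter.1 h1.1
        have : e ∈ G i ∩ U := Finset.mem_inter.2 ⟨h1.2, h2.2⟩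
        rw [h] at this
        exact absurd this (Finset.notMem_empty e)
      rw [this, hc0]
      exact hcnn i _ Finset.inter_subset_right
  · have h1 : (∑ T ∈ U.powerset, ∑ S ∈ Finset.univ.filter (fun S => S ∩ U = T), x S)
        = ∑ S : Finset (Fin n), x S :=
      Finset.sum_fiberwise_of_maps_to
        (fun S _ => Finset.mem_powerset.2 Finset.inter_subset_right) x
    rw [h1]
    exact hmass

lemma superadd
    (hcnn : ∀ i (S : Finset (Fin n)), S ⊆ G i → 0 ≤ c i S)
    (hc0 : ∀ i, c i ∅ = 0) (hB : 0 ≤ B)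
    (hvnn : ∀ S, 0 ≤ v S) (hvmono : ∀ S T : Finset (Fin n), S ⊆ T → v S ≤ v T)
    (hxos : ∀ S : Finset (Fin n), ∃ w : Fin n → ℝ,
      (∑ e ∈ S, w e) = v S ∧ ∀ T ⊆ S, (∑ e ∈ T, w e) ≤ v T)
    (U₀ U₁ : Finset (Fin n))
    (hsplit0 : ∀ i, G i ⊆ U₀ ∨ G i ∩ U₀ = ∅) (hsplit1 : ∀ i, G i ⊆ U₁ ∨ G i ∩ U₁ = ∅)
    (hdisjU : Disjoint U₀ U₁) (hcov : U₀ ∪ U₁ = Finset.univ) :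
    LPstar G v c B Finset.univ ≤ LPstar G v c B U₀ + LPstar G v c B U₁ := by
  rw [LPstar_eq]
  apply csSup_le ⟨0, lp_zero_mem G v c B hB _⟩
  rintro t ⟨x, hx0, hcost, hmass, rfl⟩
  rw [Finset.powerset_univ] at hcost hmass ⊢
  have hsub : ∀ S : Finset (Fin n), v S ≤ v (S ∩ U₀) + v (S ∩ U₁) := by
    intro S
    obtain ⟨w, hw1, hw2⟩ := hxos S
    have hSsplit : S ∩ U₀ ∪ S ∩ U₁ = S := by
      rw [← Finset.inter_union_distrib_left, hcov, Finset.inter_univ]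
    have hd : Disjoint (S ∩ U₀) (S ∩ U₁) :=
      hdisjU.mono Finset.inter_subset_right Finset.inter_subset_right
    have : (∑ e ∈ S, w e) = (∑ e ∈ S ∩ U₀, w e) + ∑ e ∈ S ∩ U₁, w e := by
      rw [← Finset.sum_union hd, hSsplit]
    have h0 := hw2 (S ∩ U₀) Finset.inter_subset_left
    have h1 := hw2 (S ∩ U₁) Finset.inter_subset_left
    linarith [hw1]
  calc (∑ S : Finset (Fin n), v S * x S)
      ≤ ∑ S : Finset (Fin n), (v (S ∩ U₀) + v (S ∩ U₁)) * x S := by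
        refine Finset.sum_le_sum fun S _ => mul_le_mul_of_nonneg_right (hsub S) (hx0 S)
    _ = (∑ S : Finset (Fin n), v (S ∩ U₀) * x S) + ∑ S : Finset (Fin n), v (S ∩ U₁) * x S := by
        rw [← Finset.sum_add_distrib]
        exact Finset.sum_congr rfl fun S _ => by ring
    _ ≤ LPstar G v c B U₀ + LPstar G v c B U₁ := by
        gcongr
        · exact restrict_le G v c B hcnn hc0 hvnn hvmono U₀ hsplit0 x hx0 hcost hmass
        · exact restrict_le G v c B hcnn hc0 hvnn hvmono U₁ hsplit1 x hx0 hcost hmass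

end LP

section Bench

variable {n k : ℕ} (G : Fin k → Finset (Fin n)) (v : Finset (Fin n) → ℝ)
  (c : Fin k → Finset (Fin n) → ℝ) (B : ℝ)

def benchSet : Set ℝ :=
  {t : ℝ | ∃ (x : Finset (Fin n) → ℝ) (V : ℝ), (∀ S, 0 ≤ x S) ∧
    (∑ S : Finset (Fin n), (∑ i, c i (S ∩ G i)) * x S) ≤ B ∧
    (∑ S : Finset (Fin n), x S) ≤ 1 ∧
    (∀ i : Fin k, (∑ S : Finset (Fin n), v (S ∩ G i) * x S) ≤ V) ∧
    t = (∑ S : Finset (Fin n), v S * x S) - V}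

lemma LPBench_eq : LPBench G v c B = sSup (benchSet G v c B) := rfl

lemma bench_zero_mem (hB : 0 ≤ B) : (0 : ℝ) ∈ benchSet G v c B := by
  refine ⟨fun _ => 0, 0, fun _ => le_refl _, ?_, ?_, ?_, ?_⟩ <;> simp [hB]

lemma bench_V_nonneg (hk : 0 < k) (hvnn : ∀ S, 0 ≤ v S)
    (x : Finset (Fin n) → ℝ) (V : ℝ) (hx0 : ∀ S, 0 ≤ x S)
    (hVi : ∀ i : Fin k, (∑ S : Finset (Fin n), v (S ∩ G i) * x S) ≤ V) : 0 ≤ V := by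
  refine le_trans ?_ (hVi ⟨0, hk⟩)
  exact Finset.sum_nonneg fun S _ => mul_nonneg (hvnn _) (hx0 S)

lemma bench_bdd (hk : 0 < k) (hvnn : ∀ S, 0 ≤ v S)
    (hvmono : ∀ S T : Finset (Fin n), S ⊆ T → v S ≤ v T) :
    BddAbove (benchSet G v c B) := by
  refine ⟨v Finset.univ, ?_⟩
  rintro t ⟨x, V, hx0, _, hmass, hVi, rfl⟩
  have hV0 : 0 ≤ V := bench_V_nonneg G v hk hvnn x V hx0 hVi
  have : (∑ S : Finset (Fin n), v S * x S) ≤ v Finset.univ := by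
    calc (∑ S : Finset (Fin n), v S * x S)
        ≤ ∑ S : Finset (Fin n), v Finset.univ * x S := by
          refine Finset.sum_le_sum fun S _ =>
            mul_le_mul_of_nonneg_right (hvmono S Finset.univ (Finset.subset_univ S)) (hx0 S)
      _ = v Finset.univ * ∑ S : Finset (Fin n), x S := by rw [Finset.mul_sum]
      _ ≤ v Finset.univ := mul_le_of_le_one_right (hvnn _) hmass
  linarith

-- OPTBench ≤ LPBench
lemma opt_le_bench (hk : 0 < k) (hB : 0 ≤ B) (hv0 : v ∅ = 0) (hvnn : ∀ S, 0 ≤ v S)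
    (hvmono : ∀ S T : Finset (Fin n), S ⊆ T → v S ≤ v T)
    (hc0 : ∀ i, c i ∅ = 0) :
    sSup {x : ℝ | ∃ S : Finset (Fin n),
        (∑ i, c i (S ∩ G i)) ≤ B ∧
        x = v S - sSup {y : ℝ | ∃ i : Fin k, y = v (S ∩ G i)}} ≤ LPBench G v c B := by
  apply csSup_le
  · refine ⟨v ∅ - sSup {y : ℝ | ∃ i : Fin k, y = v (∅ ∩ G ⟨0, hk⟩)}, ∅, ?_, rfl⟩
    simp [hc0, hB]
  · rintro t ⟨S, hcostS, rfl⟩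
    apply le_csSup (bench_bdd G v c B hk hvnn hvmono)
    set V := sSup {y : ℝ | ∃ i : Fin k, y = v (S ∩ G i)} with hV
    have hrange : {y : ℝ | ∃ i : Fin k, y = v (S ∩ G i)} = Set.range (fun i => v (S ∩ G i)) := by
      ext y; simp [eq_comm]
    have hbddr : BddAbove {y : ℝ | ∃ i : Fin k, y = v (S ∩ G i)} := by
      rw [hrange]; exact Set.Finite.bddAbove (Set.finite_range _)
    refine ⟨fun T => if T = S then 1 else 0, V, ?_, ?_, ?_, ?_, ?_⟩
    · intro T; by_cases h : T = S <;> simp [h]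
    · have : (∑ T : Finset (Fin n), (∑ i, c i (T ∩ G i)) * (if T = S then 1 else 0))
          = ∑ i, c i (S ∩ G i) := by
        rw [Finset.sum_congr rfl (fun T _ => mul_ite (T = S) (∑ i, c i (T ∩ G i)) 1 0)]
        simp [Finset.sum_ite_eq']
      rw [this]; exact hcostS
    · have : (∑ T : Finset (Fin n), (if T = S then (1:ℝ) else 0)) = 1 := by
        simp [Finset.sum_ite_eq']
      rw [this]
    · intro i
      have : (∑ T : Finset (Fin n), v (T ∩ G i) * (if T = S then 1 else 0)) = v (S ∩ G i) := by
        rw [Finset.sum_congr rfl (fun T _ => mul_ite (T = S) (v (T ∩ G i)) 1 0)]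
        simp [Finset.sum_ite_eq']
      rw [this]
      exact le_csSup hbddr ⟨i, rfl⟩
    · have : (∑ T : Finset (Fin n), v T * (if T = S then 1 else 0)) = v S := by
        rw [Finset.sum_congr rfl (fun T _ => mul_ite (T = S) (v T) 1 0)]
        simp [Finset.sum_ite_eq']
      rw [this]

end Bench

section Side
variable {n k : ℕ} (G : Fin k → Finset (Fin n)) (ω : Fin k → Fin 2)

lemma side_split (hdisj : ∀ i j : Fin k, i ≠ j → Disjoint (G i) (G j)) (j : Fin 2) : ∀ i, G i ⊆ sideSet G ω j ∨ G i ∩ sideSet G ω j = ∅ := by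
  intro i
  by_cases h : ω i = j
  · left
    exact Finset.subset_biUnion_of_mem G (Finset.mem_filter.2 ⟨Finset.mem_univ _, h⟩)
  · right
    apply Finset.eq_empty_of_forall_notMem
    intro e he
    obtain ⟨he1, he2⟩ := Finset.mem_inter.1 he
    obtain ⟨i', hi', hei'⟩ := Finset.mem_biUnion.1 he2
    have hne : i ≠ i' := by
      rintro rfl
      exact h (Finset.mem_filter.1 hi').2
    exact Finset.disjoint_left.1 (hdisj i i' hne) he1 hei'

lemma side_disjoint (hdisj : ∀ i j : Fin k, i ≠ j → Disjoint (G i) (G j)) : Disjoint (sideSet G ω 0) (sideSet G ω 1) := by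
  rw [Finset.disjoint_left]
  intro e he0 he1
  obtain ⟨i0, hi0, he0'⟩ := Finset.mem_biUnion.1 he0
  obtain ⟨i1, hi1, he1'⟩ := Finset.mem_biUnion.1 he1
  have h0 := (Finset.mem_filter.1 hi0).2
  have h1 := (Finset.mem_filter.1 hi1).2
  have hne : i0 ≠ i1 := by
    rintro rfl
    rw [h0] at h1
    exact absurd h1 (by decide)
  exact Finset.disjoint_left.1 (hdisj i0 i1 hne) he0' he1'

lemma side_union (hcover : Finset.univ.biUnion G = (Finset.univ : Finset (Fin n))) : sideSet G ω 0 ∪ sideSet G ω 1 = Finset.univ := by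
  apply Finset.eq_univ_of_forall
  intro e
  have : e ∈ Finset.univ.biUnion G := by rw [hcover]; exact Finset.mem_univ e
  obtain ⟨i, _, hei⟩ := Finset.mem_biUnion.1 this
  have : ω i = 0 ∨ ω i = 1 := by omega
  rcases this with h | h
  · exact Finset.mem_union_left _
      (Finset.mem_biUnion.2 ⟨i, Finset.mem_filter.2 ⟨Finset.mem_univ _, h⟩, hei⟩)
  · exact Finset.mem_union_right _
      (Finset.mem_biUnion.2 ⟨i, Finset.mem_filter.2 ⟨Finset.mem_univ _, h⟩, hei⟩)

lemma side_swap (j : Fin 2) :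
    sideSet G (fun i => swapF (ω i)) 0 = sideSet G ω 1 ∧
    sideSet G (fun i => swapF (ω i)) 1 = sideSet G ω 0 := by
  constructor <;>
  · unfold sideSet
    congr 1
    apply Finset.filter_congr
    intro i _
    have : ω i = 0 ∨ ω i = 1 := by omega
    rcases this with h | h <;> simp [h, swapF]

lemma inter_side_eq_biUnion (S : Finset (Fin n)) (j : Fin 2) :
    S ∩ sideSet G ω j = (Finset.univ.filter fun i => ω i = j).biUnion (fun i => S ∩ G i) := by
  unfold sideSet
  ext e
  simp only [Finset.mem_inter, Finset.mem_biUnion]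
  tauto

lemma inter_univ_biUnion (hcover : Finset.univ.biUnion G = (Finset.univ : Finset (Fin n)))
    (S : Finset (Fin n)) :
    S = Finset.univ.biUnion (fun i => S ∩ G i) := by
  ext e
  simp only [Finset.mem_inter, Finset.mem_biUnion]
  constructor
  · intro he
    have : e ∈ Finset.univ.biUnion G := by rw [hcover]; exact Finset.mem_univ e
    obtain ⟨i, hi, hei⟩ := Finset.mem_biUnion.1 this
    exact ⟨i, hi, he, hei⟩
  · rintro ⟨i, _, he, _⟩
    exact he

end Side

section Main

variable {n k : ℕ}

lemma bench_le_lpuniv (hk : 0 < k) (G : Fin k → Finset (Fin n)) (v : Finset (Fin n) → ℝ)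
    (c : Fin k → Finset (Fin n) → ℝ) (B : ℝ) (hB : 0 ≤ B)
    (hvnn : ∀ S, 0 ≤ v S) (hvmono : ∀ S T : Finset (Fin n), S ⊆ T → v S ≤ v T) :
    LPBench G v c B ≤ LPstar G v c B Finset.univ := by
  rw [LPBench_eq]
  apply csSup_le ⟨0, bench_zero_mem G v c B hB⟩
  rintro t ⟨x, V, hx0, hcost, hmass, hVi, rfl⟩
  have hV0 : 0 ≤ V := bench_V_nonneg G v hk hvnn x V hx0 hVi
  have hle : (∑ S : Finset (Fin n), v S * x S) ≤ LPstar G v c B Finset.univ := by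
    apply le_csSup (lp_bdd G v c B hvnn hvmono Finset.univ)
    exact ⟨x, hx0, by rw [Finset.powerset_univ]; exact hcost,
      by rw [Finset.powerset_univ]; exact hmass, by rw [Finset.powerset_univ]⟩
  linarith

lemma step_P1 (hk : 0 < k) (G : Fin k → Finset (Fin n))
    (hdisj : ∀ i j : Fin k, i ≠ j → Disjoint (G i) (G j))
    (hcover : Finset.univ.biUnion G = (Finset.univ : Finset (Fin n)))
    (v : Finset (Fin n) → ℝ) (hvnn : ∀ S, 0 ≤ v S)
    (hvmono : ∀ S T : Finset (Fin n), S ⊆ T → v S ≤ v T)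
    (hxos : ∀ S : Finset (Fin n), ∃ w : Fin n → ℝ,
      (∑ e ∈ S, w e) = v S ∧ ∀ T ⊆ S, (∑ e ∈ T, w e) ≤ v T)
    (c : Fin k → Finset (Fin n) → ℝ)
    (hc0 : ∀ i, c i ∅ = 0)
    (hcnn : ∀ i (S : Finset (Fin n)), S ⊆ G i → 0 ≤ c i S)
    (B : ℝ) (t : ℝ) (ht : t ∈ benchSet G v c B) :
    2 ^ k ≤ 2 * (Finset.univ.filter (fun ω : Fin k → Fin 2 =>
      t ≤ 4 * min (LPstar G v c B (sideSet G ω 0)) (LPstar G v c B (sideSet G ω 1)))).card := by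
  obtain ⟨x, V, hx0, hcost, hmass, hVi, rfl⟩ := ht
  have hw : ∀ S : Finset (Fin n), (∑ e ∈ S, (hxos S).choose e) = v S ∧
      ∀ T ⊆ S, (∑ e ∈ T, (hxos S).choose e) ≤ v T := fun S => (hxos S).choose_spec
  set w : Finset (Fin n) → Fin n → ℝ := fun S => (hxos S).choose with hwdef
  set a : Fin k → ℝ := fun i => ∑ S : Finset (Fin n), (∑ e ∈ S ∩ G i, w S e) * x S with ha
  have hterm0 : ∀ (i : Fin k) (S : Finset (Fin n)), 0 ≤ ∑ e ∈ S ∩ G i, w S e := by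
    intro i S
    have hsp : (∑ e ∈ S ∩ G i, w S e) + (∑ e ∈ S \ G i, w S e) = ∑ e ∈ S, w S e :=
      Finset.sum_inter_add_sum_sdiff S (G i) (w S)
    have h1 : (∑ e ∈ S \ G i, w S e) ≤ v (S \ G i) := (hw S).2 _ Finset.sdiff_subset
    have h2 : v (S \ G i) ≤ v S := hvmono _ _ Finset.sdiff_subset
    have h3 : (∑ e ∈ S, w S e) = v S := (hw S).1
    linarith
  have ha0 : ∀ i, 0 ≤ a i := fun i =>
    Finset.sum_nonneg fun S _ => mul_nonneg (hterm0 i S) (hx0 S)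
  have haV : ∀ i, a i ≤ V := by
    intro i
    refine le_trans (Finset.sum_le_sum fun S _ =>
      mul_le_mul_of_nonneg_right ((hw S).2 _ Finset.inter_subset_left) (hx0 S)) (hVi i)
  have hV0 : 0 ≤ V := le_trans (ha0 ⟨0, hk⟩) (haV _)
  have hSsum : ∀ S : Finset (Fin n), (∑ e ∈ S, w S e) = ∑ i, ∑ e ∈ S ∩ G i, w S e := by
    intro S
    calc (∑ e ∈ S, w S e) = ∑ e ∈ Finset.univ.biUnion (fun i => S ∩ G i), w S e :=
        Finset.sum_congr (inter_univ_biUnion G hcover S) fun _ _ => rfl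
      _ = ∑ i, ∑ e ∈ S ∩ G i, w S e := by
          apply Finset.sum_biUnion
          intro i _ j _ hij
          exact (hdisj i j hij).mono Finset.inter_subset_right Finset.inter_subset_right
  have hWa : (∑ i, a i) = ∑ S : Finset (Fin n), v S * x S := by
    rw [ha]
    rw [Finset.sum_comm]
    refine Finset.sum_congr rfl fun S _ => ?_
    rw [← Finset.sum_mul]
    congr 1
    rw [← (hw S).1, hSsum S]
  have hLP : ∀ (ω : Fin k → Fin 2) (j : Fin 2),
      (∑ i ∈ Finset.univ.filter (fun i => ω i = j), a i) ≤ LPstar G v c B (sideSet G ω j) := by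
    intro ω j
    have h1 : (∑ i ∈ Finset.univ.filter (fun i => ω i = j), a i)
        = ∑ S : Finset (Fin n),
            (∑ i ∈ Finset.univ.filter (fun i => ω i = j), ∑ e ∈ S ∩ G i, w S e) * x S := by
      rw [ha]
      rw [Finset.sum_comm]
      exact Finset.sum_congr rfl fun S _ => (Finset.sum_mul _ _ _).symm
    have h2 : ∀ S : Finset (Fin n),
        (∑ i ∈ Finset.univ.filter (fun i => ω i = j), ∑ e ∈ S ∩ G i, w S e)
          = ∑ e ∈ S ∩ sideSet G ω j, w S e := by
      intro S
      rw [inter_side_eq_biUnion, Finset.sum_biUnion]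
      intro i _ i' _ hij
      exact (hdisj i i' hij).mono Finset.inter_subset_right Finset.inter_subset_right
    rw [h1]
    calc (∑ S : Finset (Fin n),
          (∑ i ∈ Finset.univ.filter (fun i => ω i = j), ∑ e ∈ S ∩ G i, w S e) * x S)
        ≤ ∑ S : Finset (Fin n), v (S ∩ sideSet G ω j) * x S := by
          refine Finset.sum_le_sum fun S _ => mul_le_mul_of_nonneg_right ?_ (hx0 S)
          rw [h2 S]
          exact (hw S).2 _ Finset.inter_subset_left
      _ ≤ LPstar G v c B (sideSet G ω j) :=
          restrict_le G v c B hcnn hc0 hvnn hvmono _ (side_split G ω hdisj j) x hx0 hcost hmass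
  refine le_trans (reflectionHalf a V ha0 haV hV0) ?_
  apply Nat.mul_le_mul_left
  apply Finset.card_le_card
  intro ω hω
  rw [Finset.mem_filter] at hω ⊢
  refine ⟨Finset.mem_univ _, ?_⟩
  obtain ⟨hD1, hD2⟩ := abs_le.1 hω.2
  have hA0 : (∑ i, a i) + (∑ i, sgn a ω i)
      = 2 * ∑ i ∈ Finset.univ.filter (fun i => ω i = 0), a i := by
    rw [← Finset.sum_add_distrib]
    have : ∀ i : Fin k, a i + sgn a ω i = if ω i = 0 then 2 * a i else 0 := by
      intro i
      unfold sgn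
      by_cases h : ω i = 0 <;> simp [h] <;> ring
    rw [Finset.sum_congr rfl fun i _ => this i, Finset.sum_ite, Finset.sum_const_zero,
      add_zero, Finset.mul_sum]
  have hA1 : (∑ i, a i) - (∑ i, sgn a ω i)
      = 2 * ∑ i ∈ Finset.univ.filter (fun i => ω i = 1), a i := by
    have hsub : ∀ i : Fin k, a i - sgn a ω i = if ω i = 1 then 2 * a i else 0 := by
      intro i
      unfold sgn
      have : ω i = 0 ∨ ω i = 1 := by omega
      rcases this with h | h <;> simp [h] <;> ring
    rw [← Finset.sum_sub_distrib]
    rw [Finset.sum_congr rfl fun i _ => hsub i, Finset.sum_ite, Finset.sum_const_zero,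
      add_zero, Finset.mul_sum]
  have hL0 := hLP ω 0
  have hL1 := hLP ω 1
  rw [← hWa]
  have hm : ((∑ i, a i) - V) / 4 ≤ min (LPstar G v c B (sideSet G ω 0))
      (LPstar G v c B (sideSet G ω 1)) := by
    apply le_min
    · linarith
    · linarith
  linarith

end Main

/-- For a monotone normalized XOS valuation `v` and monotone normalized
player costs, with probability at least `1/4` over the random partition `U_1, U_2`,
`LP*(U_2) ≥ LP*(U_1) ≥ LP*_Bench / 4 ≥ OPT_Bench / 4` and `LP*(U_2) ≥ LP*(U) / 2`. -/
theorem stmt8 {n k : ℕ} (hk : 0 < k) (G : Fin k → Finset (Fin n))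
    (hdisj : ∀ i j : Fin k, i ≠ j → Disjoint (G i) (G j))
    (hcover : Finset.univ.biUnion G = (Finset.univ : Finset (Fin n)))
    (v : Finset (Fin n) → ℝ) (hv0 : v ∅ = 0) (hvnn : ∀ S, 0 ≤ v S)
    (hvmono : ∀ S T : Finset (Fin n), S ⊆ T → v S ≤ v T)
    -- XOS: every `S` has a supporting additive valuation
    (hxos : ∀ S : Finset (Fin n), ∃ w : Fin n → ℝ,
      (∑ e ∈ S, w e) = v S ∧ ∀ T ⊆ S, (∑ e ∈ T, w e) ≤ v T)
    (c : Fin k → Finset (Fin n) → ℝ)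
    (hc0 : ∀ i, c i ∅ = 0)
    (hcnn : ∀ i (S : Finset (Fin n)), S ⊆ G i → 0 ≤ c i S)
    (hcmono : ∀ i (S T : Finset (Fin n)), S ⊆ T → T ⊆ G i → c i S ≤ c i T)
    (B : ℝ) (hB : 0 ≤ B)
    (OPTBench : ℝ)
    (hOPTB : OPTBench = sSup {x : ℝ | ∃ S : Finset (Fin n),
        (∑ i, c i (S ∩ G i)) ≤ B ∧
        x = v S - sSup {y : ℝ | ∃ i : Fin k, y = v (S ∩ G i)}}) :
    1 / 4 ≤ prOmega k (fun ω =>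
        LPstar G v c B (sideSet G ω 0) ≤ LPstar G v c B (sideSet G ω 1) ∧
        LPBench G v c B / 4 ≤ LPstar G v c B (sideSet G ω 0) ∧
        OPTBench / 4 ≤ LPBench G v c B / 4 ∧
        LPstar G v c B Finset.univ / 2 ≤ LPstar G v c B (sideSet G ω 1)) := by
  set L : Finset (Fin n) → ℝ := LPstar G v c B with hLdef
  set Lb : ℝ := LPBench G v c B with hLbdef
  set m : (Fin k → Fin 2) → ℝ := fun ω => min (L (sideSet G ω 0)) (L (sideSet G ω 1)) with hm
  -- Step P2 : on at least half the labelings, Lb ≤ 4 * m ω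
  have hP2 : 2 ^ k ≤ 2 * (Finset.univ.filter (fun ω : Fin k → Fin 2 => Lb ≤ 4 * m ω)).card := by
    by_cases hBd : (Finset.univ.filter (fun ω : Fin k → Fin 2 => ¬ (Lb ≤ 4 * m ω))).Nonempty
    · have hBdim : ((Finset.univ.filter (fun ω : Fin k → Fin 2 => ¬ (Lb ≤ 4 * m ω))).image
          (fun ω => 4 * m ω)).Nonempty := hBd.image _
      set μ : ℝ := ((Finset.univ.filter (fun ω : Fin k → Fin 2 => ¬ (Lb ≤ 4 * m ω))).image
          (fun ω => 4 * m ω)).max' hBdim with hμ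
      have hμlt : μ < Lb := by
        have := Finset.max'_mem _ hBdim
        obtain ⟨ω, hω, hωμ⟩ := Finset.mem_image.1 this
        have := (Finset.mem_filter.1 hω).2
        push_neg at this
        rw [hμ, ← hωμ]
        exact this
      obtain ⟨t, htmem, hμt⟩ : ∃ t ∈ benchSet G v c B, μ < t := by
        apply exists_lt_of_lt_csSup ⟨0, bench_zero_mem G v c B hB⟩
        rw [← LPBench_eq]
        exact hμlt
      refine le_trans (step_P1 hk G hdisj hcover v hvnn hvmono hxos c hc0 hcnn B t htmem) ?_
      apply Nat.mul_le_mul_left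
      apply Finset.card_le_card
      intro ω hω
      rw [Finset.mem_filter] at hω ⊢
      refine ⟨Finset.mem_univ _, ?_⟩
      by_contra hcon
      have hωBd : ω ∈ Finset.univ.filter (fun ω : Fin k → Fin 2 => ¬ (Lb ≤ 4 * m ω)) :=
        Finset.mem_filter.2 ⟨Finset.mem_univ _, hcon⟩
      have : 4 * m ω ≤ μ := by
        rw [hμ]
        exact Finset.le_max'
          ((Finset.univ.filter (fun ω : Fin k → Fin 2 => ¬ (Lb ≤ 4 * m ω))).image
            (fun ω => 4 * m ω)) (4 * m ω) (Finset.mem_image.2 ⟨ω, hωBd, rfl⟩)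
      have ht4 : t ≤ 4 * m ω := hω.2
      linarith
    · rw [Finset.not_nonempty_iff_eq_empty, Finset.filter_eq_empty_iff] at hBd
      have : (Finset.univ.filter (fun ω : Fin k → Fin 2 => Lb ≤ 4 * m ω)) = Finset.univ := by
        apply Finset.filter_true_of_mem
        intro ω hω
        have := hBd hω
        push_neg at this
        exact this
      rw [this]
      have : (Finset.univ : Finset (Fin k → Fin 2)).card = 2 ^ k := by
        simp [Fintype.card_fun]
      omega
  -- the flip map and the intersection with the sorted event
  set σ : (Fin k → Fin 2) → (Fin k → Fin 2) := fun ω i => swapF (ω i) with hσ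
  have hσside : ∀ ω : Fin k → Fin 2,
      sideSet G (σ ω) 0 = sideSet G ω 1 ∧ sideSet G (σ ω) 1 = sideSet G ω 0 :=
    fun ω => side_swap G ω 0
  have hσσ : ∀ ω, σ (σ ω) = ω := by
    intro ω; funext i; exact swapF_swapF (ω i)
  set I : Finset (Fin k → Fin 2) := Finset.univ.filter
    (fun ω => Lb ≤ 4 * m ω ∧ L (sideSet G ω 0) ≤ L (sideSet G ω 1)) with hI
  have hMsub : (Finset.univ.filter (fun ω : Fin k → Fin 2 => Lb ≤ 4 * m ω)) ⊆ I ∪ I.image σ := by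
    intro ω hω
    have hωm := (Finset.mem_filter.1 hω).2
    by_cases h : L (sideSet G ω 0) ≤ L (sideSet G ω 1)
    · exact Finset.mem_union_left _ (Finset.mem_filter.2 ⟨Finset.mem_univ _, hωm, h⟩)
    · apply Finset.mem_union_right
      have hσmem : σ ω ∈ I := by
        refine Finset.mem_filter.2 ⟨Finset.mem_univ _, ?_, ?_⟩
        · have : m (σ ω) = m ω := by
            rw [hm]
            simp only
            rw [(hσside ω).1, (hσside ω).2, min_comm]
          rw [this]
          exact hωm
        · rw [(hσside ω).1, (hσside ω).2]
          exact le_of_not_ge h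
      refine Finset.mem_image.2 ⟨σ ω, hσmem, hσσ ω⟩
  have hcardI : 2 ^ k ≤ 4 * I.card := by
    have h1 : (Finset.univ.filter (fun ω : Fin k → Fin 2 => Lb ≤ 4 * m ω)).card
        ≤ I.card + (I.image σ).card :=
      le_trans (Finset.card_le_card hMsub) (Finset.card_union_le _ _)
    have h2 : (I.image σ).card ≤ I.card := Finset.card_image_le
    omega
  -- the target event contains I
  have hopt : OPTBench ≤ Lb := by
    rw [hOPTB, hLbdef]
    exact opt_le_bench G v c B hk hB hv0 hvnn hvmono hc0
  have hIE : I ⊆ Finset.univ.filter (fun ω : Fin k → Fin 2 =>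
      L (sideSet G ω 0) ≤ L (sideSet G ω 1) ∧
      Lb / 4 ≤ L (sideSet G ω 0) ∧
      OPTBench / 4 ≤ Lb / 4 ∧
      L Finset.univ / 2 ≤ L (sideSet G ω 1)) := by
    intro ω hω
    obtain ⟨_, hωm, hωs⟩ := Finset.mem_filter.1 hω
    refine Finset.mem_filter.2 ⟨Finset.mem_univ _, hωs, ?_, ?_, ?_⟩
    · have h1 : m ω ≤ L (sideSet G ω 0) := min_le_left _ _
      have : Lb / 4 ≤ L (sideSet G ω 0) := by linarith
      exact this
    · linarith
    · have hsup : L Finset.univ ≤ L (sideSet G ω 0) + L (sideSet G ω 1) := by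
        rw [hLdef]
        exact superadd G v c B hcnn hc0 hB hvnn hvmono hxos _ _
          (side_split G ω hdisj 0) (side_split G ω hdisj 1)
          (side_disjoint G ω hdisj) (side_union G ω hcover)
      have : L Finset.univ ≤ 2 * L (sideSet G ω 1) := by linarith
      linarith
  have hfinal : 2 ^ k ≤ 4 * (Finset.univ.filter (fun ω : Fin k → Fin 2 =>
      L (sideSet G ω 0) ≤ L (sideSet G ω 1) ∧
      Lb / 4 ≤ L (sideSet G ω 0) ∧
      OPTBench / 4 ≤ Lb / 4 ∧
      L Finset.univ / 2 ≤ L (sideSet G ω 1))).card := by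
    refine le_trans hcardI ?_
    exact Nat.mul_le_mul_left 4 (Finset.card_le_card hIE)
  rw [prOmega]
  rw [le_div_iff₀ (by positivity : (0:ℝ) < 2 ^ k)]
  have hcast : ((2:ℝ) ^ k) ≤ 4 * ((Finset.univ.filter (fun ω : Fin k → Fin 2 =>
      L (sideSet G ω 0) ≤ L (sideSet G ω 1) ∧
      Lb / 4 ≤ L (sideSet G ω 0) ∧
      OPTBench / 4 ≤ Lb / 4 ∧
      L Finset.univ / 2 ≤ L (sideSet G ω 1))).card : ℝ) := by
    have := hfinal
    exact_mod_cast Nat.cast_le.2 this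
  have hgoal2 : (1:ℝ)/4 * 2 ^ k ≤ ((Finset.univ.filter (fun ω : Fin k → Fin 2 =>
      L (sideSet G ω 0) ≤ L (sideSet G ω 1) ∧
      Lb / 4 ≤ L (sideSet G ω 0) ∧
      OPTBench / 4 ≤ Lb / 4 ∧
      L Finset.univ / 2 ≤ L (sideSet G ω 1))).card : ℝ) := by linarith
  convert hgoal2 using 4
  rfl
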